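/- (Bernoulli perturbation bound.) Let A, B, C be random variables with B ∼ Bernoulli(ω) independent of (A,C), and let F be a real-valued function with |F(A,1,C) − F(A,0,C)| ≤ δ a.s. Define U = E[F(A,B,C) | A,B] − E[F(A,B,C) | A]. Then E[U | A] = 0, U ≤ δ a.s., and E[U² | A] ≤ ω(1−ω)δ² a.s. -/

import Mathlib

open MeasureTheory ProbabilityTheory

/-- Bernoulli perturbation bound. For `B ∼ Bern(ω)` independent of
`(A, C)` and `|F(A,1,C) - F(A,0,C)| ≤ δ` a.s., the martingale increment
`U = E[F(A,B,C)|A,B] - E[F(A,B,C)|A]` satisfies `E[U|A] = 0`, `U ≤ δ` and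
`E[U²|A] ≤ ω(1-ω)δ²` almost surely. -/
theorem bernoulli_perturbation_bound
    {Ω α γ : Type*} [MeasurableSpace Ω] [MeasurableSpace α] [MeasurableSpace γ]
    (P : Measure Ω) [IsProbabilityMeasure P]
    (A : Ω → α) (Bv : Ω → Bool) (C : Ω → γ)
    (hA : Measurable A) (hB : Measurable Bv) (hC : Measurable C)
    (w : ℝ) (hw0 : 0 ≤ w) (hw1 : w ≤ 1)
    (hBlaw : P {ω | Bv ω = true} = ENNReal.ofReal w)
    (hindep : IndepFun Bv (fun ω => (A ω, C ω)) P)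
    (F : α → Bool → γ → ℝ)
    (hFmeas : Measurable fun p : α × Bool × γ => F p.1 p.2.1 p.2.2)
    (hint : Integrable (fun ω => F (A ω) (Bv ω) (C ω)) P)
    (δ : ℝ)
    (hδ : ∀ᵐ ω ∂P, |F (A ω) true (C ω) - F (A ω) false (C ω)| ≤ δ) :
    let mA : MeasurableSpace Ω := MeasurableSpace.comap A inferInstance
    let mAB : MeasurableSpace Ω :=
      MeasurableSpace.comap (fun ω => (A ω, Bv ω)) inferInstance
    let U : Ω → ℝ :=
      (MeasureTheory.condExp mAB P fun ω => F (A ω) (Bv ω) (C ω)) -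
        (MeasureTheory.condExp mA P fun ω => F (A ω) (Bv ω) (C ω))
    (MeasureTheory.condExp mA P U =ᵐ[P] 0) ∧
    (∀ᵐ ω ∂P, U ω ≤ δ) ∧
    (MeasureTheory.condExp mA P (fun ω => U ω ^ 2) ≤ᵐ[P]
      fun _ => w * (1 - w) * δ ^ 2) := by
  classical
  intro mA mAB U
  rename_i iΩ iα iγ iP
  set mAC : MeasurableSpace Ω :=
    MeasurableSpace.comap (fun ω => (A ω, C ω)) inferInstance with hmACdef
  letI m0 : MeasurableSpace Ω := iΩ
  obtain ⟨ω₀, hω₀⟩ := hδ.exists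
  have hδ0 : 0 ≤ δ := le_trans (abs_nonneg _) hω₀
  -- σ-algebra inequalities
  have hmA : mA ≤ m0 := hA.comap_le
  have hmAB : mAB ≤ m0 := (hA.prodMk hB).comap_le
  have hmAC : mAC ≤ m0 := (hA.prodMk hC).comap_le
  have hmemA : ∀ s : Set Ω, MeasurableSet[mA] s ↔
      ∃ t, MeasurableSet t ∧ A ⁻¹' t = s := fun s => Iff.rfl
  have hmemAB : ∀ s : Set Ω, MeasurableSet[mAB] s ↔
      ∃ t, MeasurableSet t ∧ (fun ω => (A ω, Bv ω)) ⁻¹' t = s := fun s => Iff.rfl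
  have hA_AB : mA ≤ mAB := by
    intro s hs
    obtain ⟨t, ht, rfl⟩ := (hmemA s).mp hs
    exact (hmemAB _).mpr ⟨t ×ˢ Set.univ, ht.prod MeasurableSet.univ, by ext ω; simp⟩
  have hA_AC : mA ≤ mAC := by
    intro s hs
    obtain ⟨t, ht, rfl⟩ := (hmemA s).mp hs
    exact ⟨t ×ˢ Set.univ, ht.prod MeasurableSet.univ, by ext ω; simp⟩
  -- the functions
  set f : Ω → ℝ := fun ω => F (A ω) (Bv ω) (C ω) with hfdef
  set f0 : Ω → ℝ := fun ω => F (A ω) false (C ω) with hf0def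
  set d : Ω → ℝ := fun ω => F (A ω) true (C ω) - F (A ω) false (C ω) with hddef
  set χ : Ω → ℝ := fun ω => if Bv ω = true then 1 else 0 with hχdef
  have hχ01 : ∀ ω, χ ω = 0 ∨ χ ω = 1 := by
    intro ω; by_cases h : Bv ω = true <;> simp [hχdef, h]
  have hf_eq : ∀ ω, f ω = f0 ω + χ ω * d ω := by
    intro ω
    rcases Bool.dichotomy (Bv ω) with h | h <;> simp [hfdef, hf0def, hddef, hχdef, h]
  -- measurability
  have hACmeas : @Measurable Ω (α × γ) mAC _ (fun ω => (A ω, C ω)) :=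
    Measurable.of_comap_le le_rfl
  have hf0measAC : Measurable[mAC] f0 :=
    (hFmeas.comp (measurable_fst.prodMk
      (measurable_const.prodMk measurable_snd))).comp hACmeas
  have hdmeasAC : Measurable[mAC] d := by
    have h1 : Measurable[mAC] (fun ω => F (A ω) true (C ω)) :=
      (hFmeas.comp (measurable_fst.prodMk
        (measurable_const.prodMk measurable_snd))).comp hACmeas
    exact h1.sub hf0measAC
  have hfmeas : Measurable f :=
    hFmeas.comp (hA.prodMk (hB.prodMk hC))
  have hf0meas : Measurable f0 := hf0measAC.mono hmAC le_rfl
  have hdmeas : Measurable d := hdmeasAC.mono hmAC le_rfl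
  have hBoolm : ∀ g : Bool → ℝ, Measurable g := fun g => measurable_of_countable g
  have hχmeas : Measurable χ := (hBoolm (fun t => if t = true then 1 else 0)).comp hB
  -- integrability
  have hd_int : Integrable d P := by
    refine Integrable.mono' (integrable_const δ) hdmeas.aestronglyMeasurable ?_
    filter_upwards [hδ] with ω h using by simpa [hddef, Real.norm_eq_abs] using h
  have hχbd : ∀ ω, ‖χ ω‖ ≤ 1 := by
    intro ω; rcases hχ01 ω with h | h <;> simp [h]
  have hχd_int : Integrable (fun ω => χ ω * d ω) P :=
    hd_int.bdd_mul hχmeas.aestronglyMeasurable (Filter.Eventually.of_forall hχbd)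
  have hf0_int : Integrable f0 P := by
    have : Integrable (fun ω => f ω - χ ω * d ω) P := hint.sub hχd_int
    refine this.congr (Filter.Eventually.of_forall fun ω => ?_)
    simp only [hf_eq ω]; ring
  -- Bernoulli measure facts
  have hBsetm : MeasurableSet {ω | Bv ω = true} := hB (measurableSet_singleton true)
  have hPtrue : (P {ω | Bv ω = true}).toReal = w := by
    rw [hBlaw, ENNReal.toReal_ofReal hw0]
  have hPfalse : (P {ω | Bv ω = false}).toReal = 1 - w := by
    have hc : {ω | Bv ω = false} = {ω | Bv ω = true}ᶜ := by
      ext ω; simp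
    rw [hc, measure_compl hBsetm (measure_ne_top _ _), measure_univ, hBlaw,
      ENNReal.toReal_sub_of_le (ENNReal.ofReal_le_one.mpr hw1) ENNReal.one_ne_top,
      ENNReal.toReal_one, ENNReal.toReal_ofReal hw0]
  -- KEY independence computation
  have key : ∀ (b : Bool) (Y : Ω → ℝ), Measurable[mAC] Y → Integrable Y P →
      ∫ ω, (if Bv ω = b then (1:ℝ) else 0) * Y ω ∂P
        = (if b = true then w else 1 - w) * ∫ ω, Y ω ∂P := by
    intro b Y hYm hYint
    have hYm0 : Measurable Y := hYm.mono hmAC le_rfl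
    set X : Ω → ℝ := fun ω => if Bv ω = b then 1 else 0 with hXdef
    have hXm : Measurable X := (hBoolm (fun t => if t = b then 1 else 0)).comp hB
    have hXY : IndepFun X Y P := by
      rw [IndepFun_iff]
      intro t1 t2 h1 h2
      refine (IndepFun_iff _ _ _).mp hindep t1 t2 ?_ ?_
      · obtain ⟨u, hu, rfl⟩ := h1
        exact ⟨(fun t : Bool => if t = b then (1:ℝ) else 0) ⁻¹' u, hBoolm _ hu, rfl⟩
      · obtain ⟨u, hu, rfl⟩ := h2
        exact hYm hu
    have hXint : Integrable X P := by
      refine Integrable.mono' (integrable_const (1:ℝ)) hXm.aestronglyMeasurable ?_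
      refine Filter.Eventually.of_forall fun ω => ?_
      by_cases h : Bv ω = b <;> simp [hXdef, h]
    have hmul := IndepFun.integral_mul_eq_mul_integral hXY hXint.aestronglyMeasurable hYint.aestronglyMeasurable
    have hX_val : ∫ ω, X ω ∂P = (if b = true then w else 1 - w) := by
      have hXind : X = Set.indicator {ω | Bv ω = b} (fun _ => (1:ℝ)) := by
        funext ω
        by_cases h : Bv ω = b <;> simp [hXdef, Set.indicator_apply, h]
      have hsm : MeasurableSet {ω | Bv ω = b} := hB (measurableSet_singleton b)
      rw [hXind, integral_indicator_const (1:ℝ) hsm, smul_eq_mul, mul_one]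
      cases b
      · exact hPfalse
      · simpa using (show P.real {ω | Bv ω = true} = w from hPtrue)
    calc ∫ ω, (if Bv ω = b then (1:ℝ) else 0) * Y ω ∂P
        = ∫ ω, (X * Y) ω ∂P := rfl
      _ = (∫ ω, X ω ∂P) * ∫ ω, Y ω ∂P := hmul
      _ = (if b = true then w else 1 - w) * ∫ ω, Y ω ∂P := by rw [hX_val]
  -- set-integral version over mAB-sets
  have key2 : ∀ (b : Bool) (Y : Ω → ℝ), Measurable[mAC] Y → Integrable Y P →
      ∀ T : Set (α × Bool), MeasurableSet T →
      ∫ ω in (fun ω => (A ω, Bv ω)) ⁻¹' T, (if Bv ω = b then (1:ℝ) else 0) * Y ω ∂P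
        = (if b = true then w else 1 - w) * ∫ ω in A ⁻¹' {a | (a, b) ∈ T}, Y ω ∂P := by
    intro b Y hYm hYint T hT
    have hTb : MeasurableSet {a | (a, b) ∈ T} :=
      (measurable_id.prodMk measurable_const) hT
    have hsm : MeasurableSet ((fun ω => (A ω, Bv ω)) ⁻¹' T) := (hA.prodMk hB) hT
    have hSbm : MeasurableSet (A ⁻¹' {a | (a, b) ∈ T}) := hA hTb
    rw [← integral_indicator hsm, ← integral_indicator hSbm]
    have hpt : (Set.indicator ((fun ω => (A ω, Bv ω)) ⁻¹' T)
        (fun ω => (if Bv ω = b then (1:ℝ) else 0) * Y ω))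
        = fun ω => (if Bv ω = b then (1:ℝ) else 0) *
            (Set.indicator (A ⁻¹' {a | (a, b) ∈ T}) Y) ω := by
      funext ω
      by_cases h : Bv ω = b
      · by_cases hmem : (A ω, b) ∈ T
        · have : ω ∈ (fun ω => (A ω, Bv ω)) ⁻¹' T := by simp [Set.mem_preimage, h, hmem]
          simp [Set.indicator_apply, this, h, hmem]
        · have : ω ∉ (fun ω => (A ω, Bv ω)) ⁻¹' T := by simp [Set.mem_preimage, h, hmem]
          simp [Set.indicator_apply, this, h, hmem]
      · simp [Set.indicator_apply, h]
    rw [hpt]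
    exact key b _ (hYm.indicator (hA_AC _ ((hmemA _).mpr ⟨{a | (a, b) ∈ T}, hTb, rfl⟩))) (hYint.indicator hSbm)
  -- auxiliary integrability for bounded multiplier
  have hXmul_int : ∀ (b : Bool) (Y : Ω → ℝ), Integrable Y P →
      Integrable (fun ω => (if Bv ω = b then (1:ℝ) else 0) * Y ω) P := by
    intro b Y hY
    refine hY.bdd_mul (c := 1) ?_ (Filter.Eventually.of_forall fun ω => ?_)
    · exact ((hBoolm (fun t => if t = b then (1:ℝ) else 0)).comp hB).aestronglyMeasurable
    · by_cases h : Bv ω = b <;> simp [h]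
  set f1 : Ω → ℝ := fun ω => F (A ω) true (C ω) with hf1def
  have hf1measAC : Measurable[mAC] f1 :=
    (hFmeas.comp (measurable_fst.prodMk
      (measurable_const.prodMk measurable_snd))).comp hACmeas
  have hf1_int : Integrable f1 P := by
    have : Integrable (fun ω => f0 ω + d ω) P := hf0_int.add hd_int
    refine this.congr (Filter.Eventually.of_forall fun ω => ?_)
    simp only [hf0def, hddef, hf1def]; ring
  -- conditional expectation of d
  set g : Ω → ℝ := MeasureTheory.condExp mA P d with hgdef
  have hg_sm : StronglyMeasurable[mA] g := stronglyMeasurable_condExp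
  have hg_meas : Measurable[mA] g := hg_sm.measurable
  have hg_int : Integrable g P := integrable_condExp
  have hgbound : ∀ᵐ ω ∂P, |g ω| ≤ δ := by
    have hup : g ≤ᵐ[P] fun _ => δ := by
      have h1 : d ≤ᵐ[P] fun _ => δ := by
        filter_upwards [hδ] with ω h using le_trans (le_abs_self _) h
      have h2 := condExp_mono (m := mA) hd_int (integrable_const δ) h1
      rwa [condExp_const hmA] at h2
    have hlo : (fun _ : Ω => -δ) ≤ᵐ[P] g := by
      have h1 : (fun _ : Ω => -δ) ≤ᵐ[P] d := by
        filter_upwards [hδ] with ω h using neg_le_of_abs_le h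
      have h2 := condExp_mono (m := mA) (integrable_const (-δ)) hd_int h1
      rwa [condExp_const hmA] at h2
    filter_upwards [hup, hlo] with ω h1 h2
    exact abs_le.mpr ⟨h2, h1⟩
  have hχg_int : Integrable (fun ω => χ ω * g ω) P :=
    hg_int.bdd_mul hχmeas.aestronglyMeasurable (Filter.Eventually.of_forall hχbd)
  -- conditional expectation w.r.t. mAB
  set h1f : Ω → ℝ := fun ω => MeasureTheory.condExp mA P f0 ω + χ ω * g ω with hh1def
  have hh1_int : Integrable h1f P := integrable_condExp.add hχg_int
  have hh1_sm : StronglyMeasurable[mAB] h1f := by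
    have h1 : StronglyMeasurable[mAB] (MeasureTheory.condExp mA P f0) :=
      stronglyMeasurable_condExp.mono hA_AB
    have hABself : @Measurable Ω (α × Bool) mAB _ (fun ω => (A ω, Bv ω)) :=
      Measurable.of_comap_le le_rfl
    have h2 : Measurable[mAB] χ :=
      (hBoolm (fun t => if t = true then (1:ℝ) else 0)).comp (measurable_snd.comp hABself)
    have h3 : StronglyMeasurable[mAB] g := hg_sm.mono hA_AB
    exact h1.add (h2.stronglyMeasurable.mul h3)
  have hcondAB : MeasureTheory.condExp mAB P f =ᵐ[P] h1f := by
    refine (ae_eq_condExp_of_forall_setIntegral_eq hmAB hint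
      (fun s _ _ => hh1_int.integrableOn) ?_ hh1_sm.aestronglyMeasurable).symm
    intro s hs _
    obtain ⟨T, hT, rfl⟩ := (hmemAB s).mp hs
    have hT1 : MeasurableSet {a | (a, true) ∈ T} := (measurable_id.prodMk measurable_const) hT
    have hT0 : MeasurableSet {a | (a, false) ∈ T} := (measurable_id.prodMk measurable_const) hT
    have hS1 : MeasurableSet[mA] (A ⁻¹' {a | (a, true) ∈ T}) :=
      (hmemA _).mpr ⟨_, hT1, rfl⟩
    have hS0 : MeasurableSet[mA] (A ⁻¹' {a | (a, false) ∈ T}) :=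
      (hmemA _).mpr ⟨_, hT0, rfl⟩
    have hY1 : Measurable[mAC] fun ω => MeasureTheory.condExp mA P f0 ω + g ω :=
      ((stronglyMeasurable_condExp.measurable.mono hA_AC le_rfl)).add
        (hg_meas.mono hA_AC le_rfl)
    have hY1_int : Integrable (fun ω => MeasureTheory.condExp mA P f0 ω + g ω) P :=
      integrable_condExp.add hg_int
    have hY0 : Measurable[mAC] (MeasureTheory.condExp mA P f0) :=
      stronglyMeasurable_condExp.measurable.mono hA_AC le_rfl
    -- left side
    have hLHS : ∫ ω in (fun ω => (A ω, Bv ω)) ⁻¹' T, h1f ω ∂P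
        = w * ∫ ω in A ⁻¹' {a | (a, true) ∈ T}, (MeasureTheory.condExp mA P f0 ω + g ω) ∂P
          + (1 - w) * ∫ ω in A ⁻¹' {a | (a, false) ∈ T}, MeasureTheory.condExp mA P f0 ω ∂P := by
      have hptw : ∀ ω, h1f ω
          = (if Bv ω = true then (1:ℝ) else 0) * (MeasureTheory.condExp mA P f0 ω + g ω)
            + (if Bv ω = false then (1:ℝ) else 0) * MeasureTheory.condExp mA P f0 ω := by
        intro ω
        rcases Bool.dichotomy (Bv ω) with h | h <;> simp [hh1def, hχdef, h]
      calc ∫ ω in (fun ω => (A ω, Bv ω)) ⁻¹' T, h1f ω ∂P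
          = ∫ ω in (fun ω => (A ω, Bv ω)) ⁻¹' T,
            ((if Bv ω = true then (1:ℝ) else 0) * (MeasureTheory.condExp mA P f0 ω + g ω)
              + (if Bv ω = false then (1:ℝ) else 0) * MeasureTheory.condExp mA P f0 ω) ∂P := by
            exact integral_congr_ae (Filter.Eventually.of_forall fun ω => hptw ω)
        _ = (∫ ω in (fun ω => (A ω, Bv ω)) ⁻¹' T,
              (if Bv ω = true then (1:ℝ) else 0) * (MeasureTheory.condExp mA P f0 ω + g ω) ∂P)
            + ∫ ω in (fun ω => (A ω, Bv ω)) ⁻¹' T,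
              (if Bv ω = false then (1:ℝ) else 0) * MeasureTheory.condExp mA P f0 ω ∂P := by
            exact integral_add
              ((hXmul_int true _ hY1_int).integrableOn)
              ((hXmul_int false _ integrable_condExp).integrableOn)
        _ = _ := by
            rw [key2 true _ hY1 hY1_int T hT, key2 false _ hY0 integrable_condExp T hT]
            simp
    have hRHS : ∫ ω in (fun ω => (A ω, Bv ω)) ⁻¹' T, f ω ∂P
        = w * ∫ ω in A ⁻¹' {a | (a, true) ∈ T}, f1 ω ∂P
          + (1 - w) * ∫ ω in A ⁻¹' {a | (a, false) ∈ T}, f0 ω ∂P := by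
      have hptw : ∀ ω, f ω
          = (if Bv ω = true then (1:ℝ) else 0) * f1 ω
            + (if Bv ω = false then (1:ℝ) else 0) * f0 ω := by
        intro ω
        rcases Bool.dichotomy (Bv ω) with h | h <;> simp [hfdef, hf1def, hf0def, h]
      calc ∫ ω in (fun ω => (A ω, Bv ω)) ⁻¹' T, f ω ∂P
          = ∫ ω in (fun ω => (A ω, Bv ω)) ⁻¹' T,
            ((if Bv ω = true then (1:ℝ) else 0) * f1 ω
              + (if Bv ω = false then (1:ℝ) else 0) * f0 ω) ∂P := by
            exact integral_congr_ae (Filter.Eventually.of_forall fun ω => hptw ω)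
        _ = (∫ ω in (fun ω => (A ω, Bv ω)) ⁻¹' T,
              (if Bv ω = true then (1:ℝ) else 0) * f1 ω ∂P)
            + ∫ ω in (fun ω => (A ω, Bv ω)) ⁻¹' T,
              (if Bv ω = false then (1:ℝ) else 0) * f0 ω ∂P := by
            exact integral_add
              ((hXmul_int true _ hf1_int).integrableOn)
              ((hXmul_int false _ hf0_int).integrableOn)
        _ = _ := by
            rw [key2 true _ hf1measAC hf1_int T hT, key2 false _ hf0measAC hf0_int T hT]
            simp
    rw [hLHS, hRHS]
    have e1 : ∫ ω in A ⁻¹' {a | (a, true) ∈ T}, (MeasureTheory.condExp mA P f0 ω + g ω) ∂P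
        = ∫ ω in A ⁻¹' {a | (a, true) ∈ T}, f1 ω ∂P := by
      rw [integral_add integrable_condExp.integrableOn hg_int.integrableOn,
        setIntegral_condExp hmA hf0_int hS1, hgdef, setIntegral_condExp hmA hd_int hS1,
        ← integral_add hf0_int.integrableOn hd_int.integrableOn]
      refine integral_congr_ae (Filter.Eventually.of_forall fun ω => ?_)
      simp only [hf0def, hddef, hf1def]; ring
    have e0 : ∫ ω in A ⁻¹' {a | (a, false) ∈ T}, MeasureTheory.condExp mA P f0 ω ∂P
        = ∫ ω in A ⁻¹' {a | (a, false) ∈ T}, f0 ω ∂P :=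
      setIntegral_condExp hmA hf0_int hS0
    rw [e1, e0]
  -- pull-out lemma for the Bernoulli factor under E[·|A]
  have hpull : ∀ q : Ω → ℝ, Measurable[mA] q → Integrable q P →
      MeasureTheory.condExp mA P (fun ω => χ ω * q ω) =ᵐ[P] fun ω => w * q ω := by
    intro q hqm hq_int
    have hχq_int : Integrable (fun ω => χ ω * q ω) P :=
      hq_int.bdd_mul hχmeas.aestronglyMeasurable (Filter.Eventually.of_forall hχbd)
    refine (ae_eq_condExp_of_forall_setIntegral_eq hmA hχq_int
      (fun s _ _ => (hq_int.const_mul w).integrableOn) ?_ ?_).symm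
    · intro s hs _
      obtain ⟨t, ht, rfl⟩ := (hmemA s).mp hs
      have h2 := key2 true q (hqm.mono hA_AC le_rfl) hq_int
        (t ×ˢ (Set.univ : Set Bool)) (ht.prod MeasurableSet.univ)
      have e1 : (fun ω => (A ω, Bv ω)) ⁻¹' (t ×ˢ (Set.univ : Set Bool)) = A ⁻¹' t := by
        ext ω; simp
      have e2 : {a | (a, true) ∈ t ×ˢ (Set.univ : Set Bool)} = t := by
        ext a; simp
      rw [e1, e2] at h2
      simp only [if_pos rfl] at h2
      have h3 : ∫ ω in A ⁻¹' t, χ ω * q ω ∂P = w * ∫ ω in A ⁻¹' t, q ω ∂P := h2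
      rw [h3, integral_const_mul]
    · exact ((hqm.const_mul w).stronglyMeasurable).aestronglyMeasurable
  -- conditional expectation w.r.t. mA
  have hid0 : MeasureTheory.condExp mA P (MeasureTheory.condExp mA P f0)
      = MeasureTheory.condExp mA P f0 :=
    condExp_of_stronglyMeasurable hmA stronglyMeasurable_condExp integrable_condExp
  have hcondA : MeasureTheory.condExp mA P f =ᵐ[P]
      fun ω => MeasureTheory.condExp mA P f0 ω + w * g ω := by
    calc MeasureTheory.condExp mA P f
        =ᵐ[P] MeasureTheory.condExp mA P (MeasureTheory.condExp mAB P f) :=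
          (condExp_condExp_of_le hA_AB hmAB).symm
      _ =ᵐ[P] MeasureTheory.condExp mA P h1f := condExp_congr_ae hcondAB
      _ =ᵐ[P] MeasureTheory.condExp mA P (MeasureTheory.condExp mA P f0)
            + MeasureTheory.condExp mA P (fun ω => χ ω * g ω) :=
          condExp_add integrable_condExp hχg_int mA
      _ =ᵐ[P] fun ω => MeasureTheory.condExp mA P f0 ω + w * g ω := by
          filter_upwards [hpull g hg_meas hg_int] with ω hh
          simp only [Pi.add_apply, hid0, hh]
  -- the increment
  have hU_eq : U =ᵐ[P] fun ω => (χ ω - w) * g ω := by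
    filter_upwards [hcondAB, hcondA] with ω h1 h2
    show MeasureTheory.condExp mAB P f ω - MeasureTheory.condExp mA P f ω = (χ ω - w) * g ω
    rw [h1, h2]
    simp only [hh1def]
    ring
  refine ⟨?_, ?_, ?_⟩
  · -- E[U|A] = 0
    have hsub := condExp_sub (m := mA) (μ := P)
      (integrable_condExp (f := f) (m := mAB)) (integrable_condExp (f := f) (m := mA))
    have ht := condExp_condExp_of_le (μ := P) (f := f) hA_AB hmAB
    filter_upwards [hsub, ht] with ω h1 h2
    calc MeasureTheory.condExp mA P U ω
        = (MeasureTheory.condExp mA P (MeasureTheory.condExp mAB P f)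
            - MeasureTheory.condExp mA P (MeasureTheory.condExp mA P f)) ω := h1
      _ = MeasureTheory.condExp mA P f ω - MeasureTheory.condExp mA P f ω := by
          have hidf : MeasureTheory.condExp mA P (MeasureTheory.condExp mA P f)
              = MeasureTheory.condExp mA P f :=
            condExp_of_stronglyMeasurable hmA stronglyMeasurable_condExp integrable_condExp
          rw [Pi.sub_apply, hidf, h2]
      _ = 0 := sub_self _
  · -- U ≤ δ
    filter_upwards [hU_eq, hgbound] with ω h1 h2
    have hχw : |χ ω - w| ≤ 1 := by
      rcases hχ01 ω with h | h <;> rw [h] <;> rw [abs_le] <;> constructor <;> linarith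
    calc U ω = (χ ω - w) * g ω := h1
      _ ≤ |(χ ω - w) * g ω| := le_abs_self _
      _ = |χ ω - w| * |g ω| := abs_mul _ _
      _ ≤ 1 * δ := mul_le_mul hχw h2 (abs_nonneg _) zero_le_one
      _ = δ := one_mul δ
  · -- E[U²|A] ≤ w(1-w)δ²
    have hU2 : (fun ω => U ω ^ 2) =ᵐ[P]
        fun ω => χ ω * ((1 - 2*w) * g ω ^ 2) + w^2 * g ω ^ 2 := by
      filter_upwards [hU_eq] with ω h1
      have h3 : U ω ^ 2 = (χ ω - w)^2 * g ω ^ 2 := by rw [h1]; ring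
      rw [h3]
      rcases hχ01 ω with h | h <;> rw [h] <;> ring
    have hg2_int : Integrable (fun ω => g ω ^ 2) P := by
      refine Integrable.mono' (integrable_const (δ^2))
        (((hg_meas.mono hmA le_rfl).pow_const 2).aestronglyMeasurable) ?_
      filter_upwards [hgbound] with ω h
      have h4 : |g ω| ^ 2 ≤ δ ^ 2 := pow_le_pow_left₀ (abs_nonneg _) h 2
      calc ‖g ω ^ 2‖ = |g ω| ^ 2 := by rw [Real.norm_eq_abs, abs_pow]
        _ ≤ δ ^ 2 := h4
    have hq_meas : Measurable[mA] fun ω => (1 - 2*w) * g ω ^ 2 :=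
      (hg_meas.pow_const 2).const_mul _
    have hq_int : Integrable (fun ω => (1 - 2*w) * g ω ^ 2) P := hg2_int.const_mul _
    have hχq_int : Integrable (fun ω => χ ω * ((1 - 2*w) * g ω ^ 2)) P :=
      hq_int.bdd_mul hχmeas.aestronglyMeasurable (Filter.Eventually.of_forall hχbd)
    have h32 : MeasureTheory.condExp mA P (fun ω => w^2 * g ω ^ 2)
        = fun ω => w^2 * g ω ^ 2 :=
      condExp_of_stronglyMeasurable hmA
        ((hg_meas.pow_const 2).const_mul _).stronglyMeasurable (hg2_int.const_mul _)
    have hmain : MeasureTheory.condExp mA P (fun ω => U ω ^ 2) =ᵐ[P]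
        fun ω => w * (1 - w) * g ω ^ 2 := by
      calc MeasureTheory.condExp mA P (fun ω => U ω ^ 2)
          =ᵐ[P] MeasureTheory.condExp mA P
            (fun ω => χ ω * ((1 - 2*w) * g ω ^ 2) + w^2 * g ω ^ 2) :=
            condExp_congr_ae hU2
        _ =ᵐ[P] MeasureTheory.condExp mA P (fun ω => χ ω * ((1 - 2*w) * g ω ^ 2))
              + MeasureTheory.condExp mA P (fun ω => w^2 * g ω ^ 2) :=
            condExp_add hχq_int (hg2_int.const_mul _) mA
        _ =ᵐ[P] fun ω => w * (1 - w) * g ω ^ 2 := by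
            filter_upwards [hpull _ hq_meas hq_int] with ω hh
            simp only [Pi.add_apply, hh, h32]
            ring
    filter_upwards [hmain, hgbound] with ω h1 h2
    have h3 : g ω ^ 2 ≤ δ ^ 2 := by
      have := pow_le_pow_left₀ (abs_nonneg (g ω)) h2 2
      rwa [sq_abs] at this
    have h4 : (0:ℝ) ≤ w * (1 - w) := mul_nonneg hw0 (by linarith)
    calc MeasureTheory.condExp mA P (fun ω => U ω ^ 2) ω
        = w * (1 - w) * g ω ^ 2 := h1
      _ ≤ w * (1 - w) * δ ^ 2 := by nlinarith
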